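/- Let (Ω, P) be a probability space, T > 0, γ > 0, q ∈ ℝ, r̄ ≥ 0, δ, δ_r ∈ (0,1). Let h, w, d, r : Ω × [0,T] → ℝ be such that for every ω, h(ω,·) is differentiable on [0,T], w(ω,t) ≥ 0, r(ω,t) ≥ 0, and h'(ω,t) ≥ -γ·h(ω,t) + w(ω,t)·(q - d(ω,t)) - r(ω,t) on [0,T]. Suppose the events E = {ω : ∀ t, d(ω,t) ≤ q} and F = {ω : ∀ t, r(ω,t) ≤ r̄} are measurable and independent with P(E) ≥ 1 - δ and P(F) ≥ 1 - δ_r, and the event A = {ω : ∀ t ∈ [0,T], h(ω,t) ≥ h(ω,0)·exp(-γ·t) - (r̄/γ)·(1 - exp(-γ·t))} is measurable. Then P(A) ≥ (1-δ)·(1-δ_r). -/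

import Mathlib

open MeasureTheory

lemma gronwall_aux (T γ rbar : ℝ) (hT : 0 < T) (hγ : 0 < γ) (f : ℝ → ℝ)
    (hderiv : ∀ t ∈ Set.Icc (0 : ℝ) T, ∃ f' : ℝ,
      HasDerivWithinAt f f' (Set.Icc (0 : ℝ) T) t ∧ f' ≥ -γ * f t - rbar) :
    ∀ t ∈ Set.Icc (0 : ℝ) T,
      f t ≥ f 0 * Real.exp (-γ * t) - (rbar / γ) * (1 - Real.exp (-γ * t)) := by
  classical
  set c := rbar / γ with hc
  choose f' hf' hf'ge using hderiv
  set F' : ℝ → ℝ := fun t => if ht : t ∈ Set.Icc (0 : ℝ) T then f' t ht else 0 with hF'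
  set g : ℝ → ℝ := fun t => (f t + c) * Real.exp (γ * t) with hg
  have hgderiv : ∀ t ∈ Set.Icc (0 : ℝ) T,
      HasDerivWithinAt g ((F' t + γ * (f t + c)) * Real.exp (γ * t)) (Set.Icc (0 : ℝ) T) t := by
    intro t ht
    have h1 : HasDerivWithinAt (fun s => f s + c) (F' t) (Set.Icc (0 : ℝ) T) t := by
      have := hf' t ht
      simp only [hF', dif_pos ht]
      exact this.add_const c
    have h2 : HasDerivWithinAt (fun s => Real.exp (γ * s)) (γ * Real.exp (γ * t))
        (Set.Icc (0 : ℝ) T) t := by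
      have := ((Real.hasDerivAt_exp (γ * t)).comp t ((hasDerivAt_id t).const_mul γ)).hasDerivWithinAt
        (s := Set.Icc (0 : ℝ) T)
      simpa [mul_comm, Function.comp_def] using this
    have : HasDerivWithinAt (fun s => (f s + c) * Real.exp (γ * s))
        (F' t * Real.exp (γ * t) + (f t + c) * (γ * Real.exp (γ * t))) (Set.Icc (0 : ℝ) T) t :=
      h1.mul h2
    convert this using 1
    ring
  have hcont : ContinuousOn g (Set.Icc (0 : ℝ) T) := fun t ht =>
    (hgderiv t ht).continuousWithinAt
  have hmono : MonotoneOn g (Set.Icc (0 : ℝ) T) := by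
    apply monotoneOn_of_hasDerivWithinAt_nonneg (convex_Icc 0 T) hcont
      (f' := fun t => (F' t + γ * (f t + c)) * Real.exp (γ * t))
    · intro x hx
      rw [interior_Icc] at hx
      exact ((hgderiv x (Set.Ioo_subset_Icc_self hx)).mono Set.Ioo_subset_Icc_self).mono
        (by rw [interior_Icc])
    · intro x hx
      rw [interior_Icc] at hx
      have hx' : x ∈ Set.Icc (0 : ℝ) T := Set.Ioo_subset_Icc_self hx
      have hge : F' x ≥ -γ * f x - rbar := by
        simp only [hF', dif_pos hx']; exact hf'ge x hx'
      have : 0 ≤ F' x + γ * (f x + c) := by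
        have : γ * c = rbar := by rw [hc]; field_simp
        nlinarith
      positivity
  intro t ht
  have h0 : (0 : ℝ) ∈ Set.Icc (0 : ℝ) T := ⟨le_refl 0, hT.le⟩
  have := hmono h0 ht ht.1
  simp only [hg, mul_zero, Real.exp_zero, mul_one] at this
  have hexp : 0 < Real.exp (γ * t) := Real.exp_pos _
  have hexpinv : Real.exp (-γ * t) = (Real.exp (γ * t))⁻¹ := by
    rw [← Real.exp_neg]; ring_nf
  have : (f 0 + c) * Real.exp (-γ * t) ≤ f t + c := by
    rw [hexpinv, ← div_eq_mul_inv, div_le_iff₀ hexp]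
    linarith [this]
  nlinarith [Real.exp_pos (-γ * t)]

/-- Approximated CR-CBF proposition: if the robustified barrier condition is violated by
`r(ω,t) ≥ 0`, where the uncertainty event `E = {d ≤ q}` and the violation event
`F = {r ≤ r̄}` are independent with probabilities at least `1 - δ` and `1 - δ_r`,
then the relaxed barrier bound holds with probability at least `(1-δ)(1-δ_r)`. -/
theorem stmt12 (Ω : Type*) [MeasurableSpace Ω] (P : Measure Ω) [IsProbabilityMeasure P]
    (T γ q rbar δ δr : ℝ) (hT : 0 < T) (hγ : 0 < γ) (hrbar : 0 ≤ rbar)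
    (hδ : δ ∈ Set.Ioo (0 : ℝ) 1) (hδr : δr ∈ Set.Ioo (0 : ℝ) 1)
    (h w d r : Ω → ℝ → ℝ)
    (hw : ∀ ω t, 0 ≤ w ω t) (hr : ∀ ω t, 0 ≤ r ω t)
    (hderiv : ∀ ω, ∀ t ∈ Set.Icc (0 : ℝ) T, ∃ h' : ℝ,
      HasDerivWithinAt (h ω) h' (Set.Icc (0 : ℝ) T) t ∧
      h' ≥ -γ * h ω t + w ω t * (q - d ω t) - r ω t)
    (hEmeas : MeasurableSet {ω | ∀ t ∈ Set.Icc (0 : ℝ) T, d ω t ≤ q})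
    (hFmeas : MeasurableSet {ω | ∀ t ∈ Set.Icc (0 : ℝ) T, r ω t ≤ rbar})
    (hindep : ProbabilityTheory.IndepSet
      {ω | ∀ t ∈ Set.Icc (0 : ℝ) T, d ω t ≤ q}
      {ω | ∀ t ∈ Set.Icc (0 : ℝ) T, r ω t ≤ rbar} P)
    (hE : ENNReal.ofReal (1 - δ) ≤ P {ω | ∀ t ∈ Set.Icc (0 : ℝ) T, d ω t ≤ q})
    (hF : ENNReal.ofReal (1 - δr) ≤ P {ω | ∀ t ∈ Set.Icc (0 : ℝ) T, r ω t ≤ rbar})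
    (hAmeas : MeasurableSet {ω | ∀ t ∈ Set.Icc (0 : ℝ) T,
      h ω t ≥ h ω 0 * Real.exp (-γ * t) - (rbar / γ) * (1 - Real.exp (-γ * t))}) :
    ENNReal.ofReal ((1 - δ) * (1 - δr)) ≤
      P {ω | ∀ t ∈ Set.Icc (0 : ℝ) T,
        h ω t ≥ h ω 0 * Real.exp (-γ * t) - (rbar / γ) * (1 - Real.exp (-γ * t))} := by
  set E := {ω | ∀ t ∈ Set.Icc (0 : ℝ) T, d ω t ≤ q}
  set F := {ω | ∀ t ∈ Set.Icc (0 : ℝ) T, r ω t ≤ rbar}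
  have hsub : E ∩ F ⊆ {ω | ∀ t ∈ Set.Icc (0 : ℝ) T,
      h ω t ≥ h ω 0 * Real.exp (-γ * t) - (rbar / γ) * (1 - Real.exp (-γ * t))} := by
    rintro ω ⟨hωE, hωF⟩
    exact gronwall_aux T γ rbar hT hγ (h ω) (fun t ht => by
      obtain ⟨h', hd, hge⟩ := hderiv ω t ht
      refine ⟨h', hd, ?_⟩
      have h1 : 0 ≤ w ω t * (q - d ω t) :=
        mul_nonneg (hw ω t) (sub_nonneg.2 (hωE t ht))
      have h2 : r ω t ≤ rbar := hωF t ht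
      linarith)
  calc ENNReal.ofReal ((1 - δ) * (1 - δr))
      = ENNReal.ofReal (1 - δ) * ENNReal.ofReal (1 - δr) :=
        ENNReal.ofReal_mul (by linarith [hδ.2])
    _ ≤ P E * P F := mul_le_mul' hE hF
    _ = P (E ∩ F) := hindep.measure_inter_eq_mul.symm
    _ ≤ _ := measure_mono hsub
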